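/- Let f: ℝ^n → ℝ be L-smooth, bounded below by f(x*), and let ε > 0. Suppose sequences (x^k), (y^k), (a_k), (A_k) produced by the universal method UAGMsDR satisfy, for every k: f(x^{k+1}) ≤ f(y^k) − (1/(2L))‖∇f(y^k)‖₂² + (a_{k+1} ε)/(2 A_{k+1}) and f(y^k) ≤ f(x^k), where A_{k+1} = A_k + a_{k+1} ≥ a_{k+1} > 0. Then after N steps, min_{0 ≤ k ≤ N−1} ‖∇f(y^k)‖₂² ≤ 2L(f(x^0) − f(x*))/N + Lε. -/
import Mathlib


/-- (Theorem 10 of the paper.) For an `L`-smooth `f` bounded below by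
`f x*`, if the universal method guarantees
`f (x (k+1)) ≤ f (y k) - (1/(2L))‖∇f (y k)‖² + a_{k+1} ε / (2 A_{k+1})` and
`f (y k) ≤ f (x k)`, then after `N` steps
`min_{0 ≤ k ≤ N-1} ‖∇f (y k)‖² ≤ 2 L (f (x 0) - f x*)/N + L ε`. -/
theorem stmt_16 (n : ℕ) (L ε : ℝ) (hL : 0 < L) (hε : 0 < ε)
    (f : EuclideanSpace ℝ (Fin n) → ℝ)
    (g : EuclideanSpace ℝ (Fin n) → EuclideanSpace ℝ (Fin n))
    (hdiff : ∀ z, HasGradientAt f (g z) z)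
    (hlip : ∀ z w, ‖g z - g w‖ ≤ L * ‖z - w‖)
    (xstar : EuclideanSpace ℝ (Fin n)) (hstar : ∀ z, f xstar ≤ f z)
    (x y : ℕ → EuclideanSpace ℝ (Fin n)) (a A : ℕ → ℝ)
    (hapos : ∀ k, 0 < a (k + 1))
    (hAk : ∀ k, A (k + 1) = A k + a (k + 1))
    (haA : ∀ k, a (k + 1) ≤ A (k + 1))
    (hdec : ∀ k, f (x (k + 1)) ≤
      f (y k) - 1 / (2 * L) * ‖g (y k)‖ ^ 2 + a (k + 1) * ε / (2 * A (k + 1)))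
    (hmono : ∀ k, f (y k) ≤ f (x k))
    (N : ℕ) (hN : 0 < N) :
    ∃ k < N, ‖g (y k)‖ ^ 2 ≤ 2 * L * (f (x 0) - f xstar) / N + L * ε := by
  by_contra hcon
  push_neg at hcon
  have hNpos : (0:ℝ) < (N:ℝ) := by exact_mod_cast hN
  set K : ℝ := (f (x 0) - f xstar) / N with hK
  have hApos : ∀ k, 0 < A (k + 1) := fun k => lt_of_lt_of_le (hapos k) (haA k)
  have hslack : ∀ k, a (k + 1) * ε / (2 * A (k + 1)) ≤ ε / 2 := by
    intro k
    rw [div_le_div_iff₀ (by linarith [hApos k] : (0:ℝ) < 2 * A (k + 1)) two_pos]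
    nlinarith [haA k, hapos k, hApos k]
  have hstep : ∀ k < N, f (x (k + 1)) < f (x k) - K := by
    intro k hk
    have h3 := hcon k hk
    have h3' : 2 * L * K + L * ε < ‖g (y k)‖ ^ 2 := by
      rw [hK, ← mul_div_assoc]; exact h3
    have h7 : K + ε / 2 < 1 / (2 * L) * ‖g (y k)‖ ^ 2 := by
      rw [div_mul_eq_mul_div, lt_div_iff₀ (by positivity)]
      nlinarith
    have h4 := hdec k
    have h5 := hmono k
    have h6 := hslack k
    linarith
  have hind : ∀ m, 1 ≤ m → m ≤ N → f (x m) < f (x 0) - m * K := by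
    intro m hm
    induction m, hm using Nat.le_induction with
    | base =>
        intro h1
        have := hstep 0 hN
        simpa using this
    | succ m hm ih =>
        intro hmN
        have hmN' : m < N := Nat.lt_of_succ_le hmN
        have h1 := hstep m hmN'
        have h2 := ih (le_of_lt hmN')
        have : ((m + 1 : ℕ) : ℝ) * K = (m : ℝ) * K + K := by push_cast; ring
        rw [this]
        linarith
  have hfinal := hind N hN le_rfl
  have hNK : (N : ℝ) * K = f (x 0) - f xstar := by
    rw [hK, mul_div_cancel₀ _ (ne_of_gt hNpos)]
  have := hstar (x N)
  rw [hNK] at hfinal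
  linarith
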